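/- For every λ ∈ ℚ with λ ≠ 0, the product ⧢_λ makes ℚ⟨L⟩ a commutative, associative, unital ℚ-algebra with unit the empty word e: for all a, b, c ∈ ℚ⟨L⟩ one has a ⧢_λ b = b ⧢_λ a, (a ⧢_λ b) ⧢_λ c = a ⧢_λ (b ⧢_λ c), and e ⧢_λ a = a. -/

import Mathlib

open scoped TensorProduct

/-- The two-letter alphabet `L = {d, y}`. -/
inductive Letter : Type
  | d : Letter
  | y : Letter
deriving DecidableEq

/-- `ℚ⟨L⟩`, the ℚ-vector space with basis the words on `L` (with the concatenation
product, it is the free noncommutative ℚ-algebra on `L`). -/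
abbrev V : Type := MonoidAlgebra ℚ (FreeMonoid Letter)

/-- The basis vector corresponding to a word. -/
noncomputable def wrd (w : List Letter) : V :=
  MonoidAlgebra.single (FreeMonoid.ofList w) (1 : ℚ)

/-- The shuffle-type product `⧢_λ` on basis words, defined recursively by
(P1) `e ⧢ w = w ⧢ e = w`; (P2) `(yu) ⧢ v = u ⧢ (yv) = y(u ⧢ v)`;
(P3) `(du) ⧢ (dv) = (1/λ)(d(u ⧢ v) − (du) ⧢ v − u ⧢ (dv))`. -/
noncomputable def shW (lam : ℚ) : List Letter → List Letter → V
  | [], v => wrd v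
  | u@(_ :: _), [] => wrd u
  | (Letter.y :: u), v => wrd [Letter.y] * shW lam u v
  | (Letter.d :: u), (Letter.y :: v) => wrd [Letter.y] * shW lam (Letter.d :: u) v
  | (Letter.d :: u), (Letter.d :: v) =>
      lam⁻¹ • (wrd [Letter.d] * shW lam u v
        - shW lam (Letter.d :: u) v - shW lam u (Letter.d :: v))
termination_by u v => u.length + v.length

/-- The ℚ-bilinear extension of `⧢_λ` to `ℚ⟨L⟩`. -/
noncomputable def shL (lam : ℚ) : V →ₗ[ℚ] V →ₗ[ℚ] V :=
  (Finsupp.lsum ℚ fun u => LinearMap.toSpanSingleton ℚ (V →ₗ[ℚ] V)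
    ((Finsupp.lsum ℚ fun v =>
      LinearMap.toSpanSingleton ℚ V (shW lam (FreeMonoid.toList u) (FreeMonoid.toList v)))
      ∘ₗ (MonoidAlgebra.coeffLinearEquiv ℚ).toLinearMap))
    ∘ₗ (MonoidAlgebra.coeffLinearEquiv ℚ).toLinearMap

lemma V_induction_linear {motive : V → Prop} (x : V) (h0 : motive 0)
    (hadd : ∀ x y : V, motive x → motive y → motive (x + y))
    (hsingle : ∀ m r, motive (MonoidAlgebra.single m r)) : motive x :=
  MonoidAlgebra.induction_linear x h0 hadd hsingle

/-! ### Basic lemmas on `wrd` -/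

lemma wrd_nil : wrd [] = 1 := rfl

lemma wrd_cons (a : Letter) (u : List Letter) : wrd (a :: u) = wrd [a] * wrd u := by
  simp [wrd, MonoidAlgebra.single_mul_single]

lemma single_eq_smul_wrd (u : FreeMonoid Letter) (r : ℚ) :
    (MonoidAlgebra.single u r : V) = r • wrd (FreeMonoid.toList u) := by
  rw [wrd, FreeMonoid.ofList_toList]
  show _ = r • MonoidAlgebra.single u 1
  rw [MonoidAlgebra.smul_single', mul_one]

/-! ### Equation lemmas for `shW` -/

lemma shW_nil_left (lam : ℚ) (v : List Letter) : shW lam [] v = wrd v := by rw [shW]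

lemma shW_nil_right (lam : ℚ) (u : List Letter) : shW lam u [] = wrd u := by
  cases u with
  | nil => rw [shW]
  | cons a u => cases a <;> rw [shW]

lemma shW_y_left (lam : ℚ) (u v : List Letter) :
    shW lam (.y :: u) v = wrd [.y] * shW lam u v := by
  cases v with
  | nil => rw [shW_nil_right, shW_nil_right, wrd_cons]
  | cons b v => rw [shW]; simp

lemma shW_y_right (lam : ℚ) (u v : List Letter) :
    shW lam u (.y :: v) = wrd [.y] * shW lam u v := by
  induction u with
  | nil => rw [shW_nil_left, shW_nil_left, wrd_cons]
  | cons a u ih =>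
    cases a with
    | y => rw [shW_y_left, shW_y_left, ih, ← mul_assoc]
    | d => rw [shW]

lemma shW_d_d (lam : ℚ) (u v : List Letter) :
    shW lam (.d :: u) (.d :: v) = lam⁻¹ • (wrd [.d] * shW lam u v
      - shW lam (.d :: u) v - shW lam u (.d :: v)) := by
  rw [shW]

lemma shW_d_d' {lam : ℚ} (hlam : lam ≠ 0) (u v : List Letter) :
    lam • shW lam (.d :: u) (.d :: v) = wrd [.d] * shW lam u v
      - shW lam (.d :: u) v - shW lam u (.d :: v) := by
  rw [shW_d_d, smul_smul, mul_inv_cancel₀ hlam, one_smul]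

/-! ### `shL` on basis vectors -/

lemma shL_single (lam : ℚ) (u v : FreeMonoid Letter) (r s : ℚ) :
    shL lam (MonoidAlgebra.single u r : V) (MonoidAlgebra.single v s : V)
      = (r * s) • shW lam (FreeMonoid.toList u) (FreeMonoid.toList v) := by
  rw [shL]
  erw [LinearMap.comp_apply, Finsupp.lsum_single, LinearMap.toSpanSingleton_apply, LinearMap.smul_apply,
    LinearMap.comp_apply,
    Finsupp.lsum_single, LinearMap.toSpanSingleton_apply]
  rw [smul_smul, mul_comm]

lemma shL_wrd (lam : ℚ) (u v : List Letter) :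
    shL lam (wrd u) (wrd v) = shW lam u v := by
  rw [wrd, wrd, shL_single]
  simp [FreeMonoid.toList_ofList]

/-! ### Bilinear identities for `shL` -/

lemma shL_one_left (lam : ℚ) (a : V) : shL lam 1 a = a := by
  induction a using V_induction_linear with
  | h0 => simp
  | hadd f g hf hg => rw [map_add, hf, hg]
  | hsingle u r =>
    rw [single_eq_smul_wrd, map_smul, ← wrd_nil, shL_wrd, shW_nil_left]

lemma shL_one_right (lam : ℚ) (a : V) : shL lam a 1 = a := by
  induction a using V_induction_linear with
  | h0 => rw [map_zero, LinearMap.zero_apply]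
  | hadd f g hf hg => rw [map_add, LinearMap.add_apply, hf, hg]
  | hsingle u r =>
    rw [single_eq_smul_wrd, map_smul, LinearMap.smul_apply, ← wrd_nil, shL_wrd, shW_nil_right]

lemma shL_y_left (lam : ℚ) (a b : V) :
    shL lam (wrd [.y] * a) b = wrd [.y] * shL lam a b := by
  induction a using V_induction_linear with
  | h0 => simp
  | hadd f g hf hg => rw [mul_add, map_add, LinearMap.add_apply, hf, hg, map_add,
      LinearMap.add_apply, mul_add]
  | hsingle u r =>
    induction b using V_induction_linear with
    | h0 => simp
    | hadd f g hf hg => rw [map_add, hf, hg, map_add, mul_add]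
    | hsingle v s =>
      rw [single_eq_smul_wrd u, single_eq_smul_wrd v]
      simp only [mul_smul_comm, map_smul, LinearMap.smul_apply, ← wrd_cons, shL_wrd]
      rw [shW_y_left]

lemma shL_y_right (lam : ℚ) (a b : V) :
    shL lam a (wrd [.y] * b) = wrd [.y] * shL lam a b := by
  induction a using V_induction_linear with
  | h0 => simp
  | hadd f g hf hg => rw [map_add, LinearMap.add_apply, LinearMap.add_apply, hf, hg, mul_add]
  | hsingle u r =>
    induction b using V_induction_linear with
    | h0 => simp
    | hadd f g hf hg => rw [mul_add, map_add, hf, hg, map_add, mul_add]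
    | hsingle v s =>
      rw [single_eq_smul_wrd u, single_eq_smul_wrd v]
      simp only [mul_smul_comm, map_smul, LinearMap.smul_apply, ← wrd_cons, shL_wrd]
      rw [shW_y_right]

lemma shL_dd {lam : ℚ} (hlam : lam ≠ 0) (a b : V) :
    lam • shL lam (wrd [.d] * a) (wrd [.d] * b)
      = wrd [.d] * shL lam a b - shL lam (wrd [.d] * a) b - shL lam a (wrd [.d] * b) := by
  induction a using V_induction_linear with
  | h0 => simp
  | hadd f g hf hg =>
    simp only [mul_add, add_mul, map_add, LinearMap.add_apply, smul_add, hf, hg]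
    abel
  | hsingle u r =>
    induction b using V_induction_linear with
    | h0 => simp
    | hadd f g hf hg =>
      simp only [mul_add, add_mul, map_add, LinearMap.add_apply, smul_add, hf, hg]
      abel
    | hsingle v s =>
      rw [single_eq_smul_wrd u, single_eq_smul_wrd v]
      simp only [mul_smul_comm, map_smul, LinearMap.smul_apply, ← wrd_cons, shL_wrd, smul_sub,
        smul_comm lam r, smul_comm lam s]
      rw [shW_d_d' hlam]
      simp only [smul_sub]

/-! ### The merge product on words -/

def merge : List Letter → List Letter → List Letter
  | [], v => v
  | u@(_ :: _), [] => u
  | (Letter.y :: u), v => Letter.y :: merge u v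
  | (Letter.d :: u), (Letter.y :: v) => Letter.y :: merge (Letter.d :: u) v
  | (Letter.d :: u), (Letter.d :: v) => Letter.d :: merge u v
termination_by u v => u.length + v.length

lemma merge_nil_left (v : List Letter) : merge [] v = v := by rw [merge]

lemma merge_nil_right (u : List Letter) : merge u [] = u := by
  cases u with
  | nil => rw [merge]
  | cons a u => cases a <;> rw [merge]

lemma merge_y_left (u v : List Letter) : merge (.y :: u) v = .y :: merge u v := by
  cases v with
  | nil => rw [merge_nil_right, merge_nil_right]
  | cons b v => rw [merge]; simp

lemma merge_y_right (u v : List Letter) : merge u (.y :: v) = .y :: merge u v := by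
  induction u with
  | nil => rw [merge_nil_left, merge_nil_left]
  | cons a u ih =>
    cases a with
    | y => rw [merge_y_left, merge_y_left, ih]
    | d => rw [merge]

lemma merge_d_d (u v : List Letter) : merge (.d :: u) (.d :: v) = .d :: merge u v := by
  rw [merge]

lemma merge_comm (u v : List Letter) : merge u v = merge v u := by
  suffices h : ∀ (n : ℕ) (u v : List Letter), u.length + v.length ≤ n → merge u v = merge v u by
    exact h (u.length + v.length) u v le_rfl
  intro n
  induction n with
  | zero =>
    intro u v h
    have hu : u = [] := List.length_eq_zero_iff.mp (by omega)
    have hv : v = [] := List.length_eq_zero_iff.mp (by omega)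
    subst hu; subst hv; rfl
  | succ n ih =>
    intro u v h
    match u, v with
    | [], v => rw [merge_nil_left, merge_nil_right]
    | u, [] => rw [merge_nil_left, merge_nil_right]
    | .y :: u, v =>
      rw [merge_y_left, merge_y_right, ih u v (by simp at h ⊢; omega)]
    | u, .y :: v =>
      rw [merge_y_left, merge_y_right, ih u v (by simp at h ⊢; omega)]
    | .d :: u, .d :: v =>
      rw [merge_d_d, merge_d_d, ih u v (by simp at h ⊢; omega)]

lemma merge_assoc (u v w : List Letter) : merge (merge u v) w = merge u (merge v w) := by
  suffices h : ∀ (n : ℕ) (u v w : List Letter), u.length + v.length + w.length ≤ n →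
      merge (merge u v) w = merge u (merge v w) by
    exact h _ u v w le_rfl
  intro n
  induction n with
  | zero =>
    intro u v w h
    have hu : u = [] := List.length_eq_zero_iff.mp (by omega)
    have hv : v = [] := List.length_eq_zero_iff.mp (by omega)
    subst hu; subst hv; rw [merge_nil_left, merge_nil_left, merge_nil_left]
  | succ n ih =>
    intro u v w h
    match u, v, w with
    | [], v, w => rw [merge_nil_left, merge_nil_left]
    | u, [], w => rw [merge_nil_left, merge_nil_right]
    | u, v, [] => rw [merge_nil_right, merge_nil_right]
    | .y :: u, v, w =>
      rw [merge_y_left, merge_y_left, merge_y_left, ih u v w (by simp at h ⊢; omega)]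
    | u, .y :: v, w =>
      rw [merge_y_right, merge_y_left, merge_y_left, merge_y_right,
        ih u v w (by simp at h ⊢; omega)]
    | u, v, .y :: w =>
      rw [merge_y_right, merge_y_right, merge_y_right, ih u v w (by simp at h ⊢; omega)]
    | .d :: u, .d :: v, .d :: w =>
      rw [merge_d_d, merge_d_d, merge_d_d, merge_d_d, ih u v w (by simp at h ⊢; omega)]

/-- The bilinear extension of the merge product. -/
noncomputable def muL : V →ₗ[ℚ] V →ₗ[ℚ] V :=
  (Finsupp.lsum ℚ fun u => LinearMap.toSpanSingleton ℚ (V →ₗ[ℚ] V)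
    ((Finsupp.lsum ℚ fun v =>
      LinearMap.toSpanSingleton ℚ V (wrd (merge (FreeMonoid.toList u) (FreeMonoid.toList v))))
      ∘ₗ (MonoidAlgebra.coeffLinearEquiv ℚ).toLinearMap))
    ∘ₗ (MonoidAlgebra.coeffLinearEquiv ℚ).toLinearMap

lemma muL_single (u v : FreeMonoid Letter) (r s : ℚ) :
    muL (MonoidAlgebra.single u r : V) (MonoidAlgebra.single v s : V)
      = (r * s) • wrd (merge (FreeMonoid.toList u) (FreeMonoid.toList v)) := by
  rw [muL]
  erw [LinearMap.comp_apply, Finsupp.lsum_single, LinearMap.toSpanSingleton_apply, LinearMap.smul_apply,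
    LinearMap.comp_apply,
    Finsupp.lsum_single, LinearMap.toSpanSingleton_apply]
  rw [smul_smul, mul_comm]

lemma muL_wrd (u v : List Letter) : muL (wrd u) (wrd v) = wrd (merge u v) := by
  rw [wrd, wrd, muL_single]
  simp [FreeMonoid.toList_ofList]

lemma muL_comm (a b : V) : muL a b = muL b a := by
  induction a using V_induction_linear with
  | h0 => simp
  | hadd f g hf hg => rw [map_add, LinearMap.add_apply, hf, hg, map_add]
  | hsingle u r =>
    induction b using V_induction_linear with
    | h0 => simp
    | hadd f g hf hg => rw [map_add, hf, hg, map_add, LinearMap.add_apply]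
    | hsingle v s => rw [muL_single, muL_single, merge_comm, mul_comm]

lemma muL_assoc (a b c : V) : muL (muL a b) c = muL a (muL b c) := by
  induction a using V_induction_linear with
  | h0 => simp
  | hadd f g hf hg => simp only [map_add, LinearMap.add_apply, hf, hg]
  | hsingle u r =>
    induction b using V_induction_linear with
    | h0 => simp
    | hadd f g hf hg => simp only [map_add, LinearMap.add_apply, hf, hg]
    | hsingle v s =>
      induction c using V_induction_linear with
      | h0 => simp
      | hadd f g hf hg => simp only [map_add, LinearMap.add_apply, hf, hg]
      | hsingle w t =>
        simp only [single_eq_smul_wrd, map_smul, LinearMap.smul_apply, muL_wrd,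
          FreeMonoid.toList_ofList, smul_smul, merge_assoc]
        congr 1
        ring

/-! ### The substitution `d ↦ λ·d + 1` and its inverse -/

noncomputable def phL (lam : ℚ) : Letter → V
  | .d => lam • wrd [.d] + 1
  | .y => wrd [.y]

noncomputable def phiW (lam : ℚ) (u : List Letter) : V := (u.map (phL lam)).prod

lemma phiW_nil (lam : ℚ) : phiW lam [] = 1 := rfl

lemma phiW_cons (lam : ℚ) (a : Letter) (u : List Letter) :
    phiW lam (a :: u) = phL lam a * phiW lam u := by simp [phiW]

lemma phiW_append (lam : ℚ) (u v : List Letter) :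
    phiW lam (u ++ v) = phiW lam u * phiW lam v := by simp [phiW]

noncomputable def phi (lam : ℚ) : V →ₗ[ℚ] V :=
  (Finsupp.lsum ℚ fun u => LinearMap.toSpanSingleton ℚ V (phiW lam (FreeMonoid.toList u)))
    ∘ₗ (MonoidAlgebra.coeffLinearEquiv ℚ).toLinearMap

lemma phi_single (lam : ℚ) (u : FreeMonoid Letter) (r : ℚ) :
    phi lam (MonoidAlgebra.single u r : V) = r • phiW lam (FreeMonoid.toList u) := by
  rw [phi]
  erw [LinearMap.comp_apply, Finsupp.lsum_single, LinearMap.toSpanSingleton_apply]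

lemma phi_wrd (lam : ℚ) (u : List Letter) : phi lam (wrd u) = phiW lam u := by
  rw [wrd, phi_single, FreeMonoid.toList_ofList, one_smul]

lemma phi_mul (lam : ℚ) (a b : V) : phi lam (a * b) = phi lam a * phi lam b := by
  induction a using V_induction_linear with
  | h0 => simp
  | hadd f g hf hg => rw [add_mul, map_add, hf, hg, map_add, add_mul]
  | hsingle u r =>
    induction b using V_induction_linear with
    | h0 => simp
    | hadd f g hf hg => rw [mul_add, map_add, hf, hg, map_add, mul_add]
    | hsingle v s =>
      rw [show (MonoidAlgebra.single u r : V) = MonoidAlgebra.single u r from rfl,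
        show (MonoidAlgebra.single v s : V) = MonoidAlgebra.single v s from rfl,
        MonoidAlgebra.single_mul_single, phi_single,
        phi_single, phi_single]
      rw [show FreeMonoid.toList (u * v) = FreeMonoid.toList u ++ FreeMonoid.toList v from rfl,
        phiW_append, mul_smul, smul_mul_assoc, mul_smul_comm]

noncomputable def psL (lam : ℚ) : Letter → V
  | .d => lam⁻¹ • wrd [.d] - lam⁻¹ • 1
  | .y => wrd [.y]

noncomputable def psiW (lam : ℚ) (u : List Letter) : V := (u.map (psL lam)).prod

lemma psiW_cons (lam : ℚ) (a : Letter) (u : List Letter) :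
    psiW lam (a :: u) = psL lam a * psiW lam u := by simp [psiW]

noncomputable def psi (lam : ℚ) : V →ₗ[ℚ] V :=
  (Finsupp.lsum ℚ fun u => LinearMap.toSpanSingleton ℚ V (psiW lam (FreeMonoid.toList u)))
    ∘ₗ (MonoidAlgebra.coeffLinearEquiv ℚ).toLinearMap

lemma psi_single (lam : ℚ) (u : FreeMonoid Letter) (r : ℚ) :
    psi lam (MonoidAlgebra.single u r : V) = r • psiW lam (FreeMonoid.toList u) := by
  rw [psi]
  erw [LinearMap.comp_apply, Finsupp.lsum_single, LinearMap.toSpanSingleton_apply]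

lemma psi_wrd (lam : ℚ) (u : List Letter) : psi lam (wrd u) = psiW lam u := by
  rw [wrd, psi_single, FreeMonoid.toList_ofList, one_smul]

lemma phi_psL {lam : ℚ} (hlam : lam ≠ 0) (a : Letter) : phi lam (psL lam a) = wrd [a] := by
  cases a with
  | y => rw [psL, phi_wrd, phiW_cons, phiW_nil, mul_one, phL]
  | d =>
    have h1 : phi lam (1 : V) = 1 := by
      rw [← wrd_nil, phi_wrd, phiW_nil]; exact wrd_nil.symm
    rw [psL, map_sub, map_smul, map_smul, h1, phi_wrd, phiW_cons, phiW_nil, mul_one, phL,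
      smul_add, smul_smul, inv_mul_cancel₀ hlam, one_smul]
    abel

lemma phi_psi {lam : ℚ} (hlam : lam ≠ 0) (a : V) : phi lam (psi lam a) = a := by
  have hw : ∀ u : List Letter, phi lam (psi lam (wrd u)) = wrd u := by
    intro u
    induction u with
    | nil =>
      rw [psi_wrd]
      show phi lam 1 = wrd []
      rw [← wrd_nil, phi_wrd, phiW_nil]
      exact wrd_nil.symm
    | cons a u ih =>
      rw [psi_wrd, psiW_cons, phi_mul, phi_psL hlam, ← psi_wrd, ih, ← wrd_cons]
  induction a using V_induction_linear with
  | h0 => simp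
  | hadd f g hf hg => rw [map_add, map_add, hf, hg]
  | hsingle u r => rw [single_eq_smul_wrd, map_smul, map_smul, hw]

/-! ### The key intertwining lemma -/

lemma key {lam : ℚ} (hlam : lam ≠ 0) (u v : List Letter) :
    shL lam (phiW lam u) (phiW lam v) = phiW lam (merge u v) := by
  suffices h : ∀ (n : ℕ) (u v : List Letter), u.length + v.length ≤ n →
      shL lam (phiW lam u) (phiW lam v) = phiW lam (merge u v) by
    exact h _ u v le_rfl
  intro n
  induction n with
  | zero =>
    intro u v h
    have hu : u = [] := List.length_eq_zero_iff.mp (by omega)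
    have hv : v = [] := List.length_eq_zero_iff.mp (by omega)
    subst hu; subst hv
    rw [merge_nil_left, phiW_nil, shL_one_left]
  | succ n ih =>
    intro u v h
    match u, v with
    | [], v => rw [merge_nil_left, phiW_nil, shL_one_left]
    | u, [] => rw [merge_nil_right, phiW_nil, shL_one_right]
    | .y :: u, v =>
      rw [phiW_cons, show phL lam .y = wrd [.y] from rfl, shL_y_left,
        ih u v (by simp at h ⊢; omega), merge_y_left, phiW_cons]
      rfl
    | .d :: u, .y :: v =>
      rw [phiW_cons lam .y, show phL lam .y = wrd [.y] from rfl, shL_y_right,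
        ih (.d :: u) v (by simp at h ⊢; omega), merge_y_right, phiW_cons lam .y]
      rfl
    | .d :: u, .d :: v =>
      have hd : ∀ w : List Letter,
          phiW lam (.d :: w) = lam • (wrd [.d] * phiW lam w) + phiW lam w := by
        intro w
        rw [phiW_cons, phL, add_mul, one_mul, smul_mul_assoc]
      rw [hd u, hd v, merge_d_d, hd (merge u v), ← ih u v (by simp at h ⊢; omega)]
      set A := phiW lam u
      set B := phiW lam v
      simp only [map_add, map_smul, LinearMap.add_apply, LinearMap.smul_apply]
      rw [shL_dd hlam A B]
      simp only [smul_add, smul_sub]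
      abel

lemma key' {lam : ℚ} (hlam : lam ≠ 0) (a b : V) :
    shL lam (phi lam a) (phi lam b) = phi lam (muL a b) := by
  induction a using V_induction_linear with
  | h0 => simp
  | hadd f g hf hg => simp only [map_add, LinearMap.add_apply, hf, hg]
  | hsingle u r =>
    induction b using V_induction_linear with
    | h0 => simp
    | hadd f g hf hg => simp only [map_add, LinearMap.add_apply, hf, hg]
    | hsingle v s =>
      rw [phi_single, phi_single, muL_single]
      conv_rhs => rw [map_smul, phi_wrd]
      simp only [map_smul, LinearMap.smul_apply, key hlam, smul_smul]
      congr 1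
      ring

/-! ### Main theorem -/

/-- For `λ ≠ 0`, the product `⧢_λ` makes `ℚ⟨L⟩` a commutative, associative, unital
ℚ-algebra with unit the empty word. -/
theorem stmt_8 (lam : ℚ) (hlam : lam ≠ 0) (a b c : V) :
    shL lam a b = shL lam b a ∧
    shL lam (shL lam a b) c = shL lam a (shL lam b c) ∧
    shL lam (wrd []) a = a := by
  have ha : a = phi lam (psi lam a) := (phi_psi hlam a).symm
  have hb : b = phi lam (psi lam b) := (phi_psi hlam b).symm
  have hc : c = phi lam (psi lam c) := (phi_psi hlam c).symm
  refine ⟨?_, ?_, ?_⟩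
  · rw [ha, hb, key' hlam, key' hlam, muL_comm]
  · rw [ha, hb, hc, key' hlam, key' hlam, key' hlam, key' hlam, muL_assoc]
  · rw [wrd_nil, shL_one_left]
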